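/- Let x ∈ ℝⁿ and let S ⊆ ℝⁿ satisfy S ⊆ {y | g(y) > 0} ∩ {y | l(y) > 0}. Suppose π_H is a control policy rendering S robustly invariant, i.e., for all y ∈ S and all d ∈ D, f(y, π_H(y), d) ∈ S. Suppose π_V is a control policy such that for every disturbance policy π_d, the closed-loop trajectory (x^V_t) from x under (π_V, π_d) admits some τ ∈ ℕ with x^V_τ ∈ S and l(x^V_t) > 0 for all t ≤ τ. Then the switching policy π defined by π(y) = π_H(y) if y ∈ S and π(y) = π_V(y) otherwise, achieves reach-avoid-stay from x: for every disturbance policy π_d, the closed-loop trajectory (x_t) from x under (π, π_d) satisfies l(x_t) > 0 for all t ∈ ℕ and there exists τ ∈ ℕ with x_t ∈ S (hence g(x_t) > 0) for all t ≥ τ; in particular x ∈ RAS. -/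

import Mathlib

open Set

noncomputable section

/-- One-step closed-loop map of the system `x_{t+1} = f(x_t, π_u(x_t), π_d(x_t))`
under a control policy `πu : ℝⁿ → U` and a disturbance policy `πd : ℝⁿ → D`.
The closed-loop trajectory from `x` is `t ↦ (cl f πu πd)^[t] x`. -/
def cl {n mu md : ℕ} {U : Set (Fin mu → ℝ)} {D : Set (Fin md → ℝ)}
    (f : (Fin n → ℝ) → (Fin mu → ℝ) → (Fin md → ℝ) → (Fin n → ℝ))
    (πu : (Fin n → ℝ) → U) (πd : (Fin n → ℝ) → D) :
    (Fin n → ℝ) → (Fin n → ℝ) :=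
  fun y => f y (πu y) (πd y)

/-- The reach-avoid-stay set `RAS`. -/
def RASset {n mu md : ℕ} (U : Set (Fin mu → ℝ)) (D : Set (Fin md → ℝ))
    (f : (Fin n → ℝ) → (Fin mu → ℝ) → (Fin md → ℝ) → (Fin n → ℝ))
    (g l : (Fin n → ℝ) → ℝ) : Set (Fin n → ℝ) :=
  {x | ∃ πu : (Fin n → ℝ) → U, ∀ πd : (Fin n → ℝ) → D,
      (∀ t : ℕ, 0 < l ((cl f πu πd)^[t] x)) ∧
      ∃ τ : ℕ, ∀ t : ℕ, τ ≤ t → 0 < g ((cl f πu πd)^[t] x)}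

/-- The robust viability kernel `AS`. -/
def ASset {n mu md : ℕ} (U : Set (Fin mu → ℝ)) (D : Set (Fin md → ℝ))
    (f : (Fin n → ℝ) → (Fin mu → ℝ) → (Fin md → ℝ) → (Fin n → ℝ))
    (g l : (Fin n → ℝ) → ℝ) : Set (Fin n → ℝ) :=
  {x | ∃ πu : (Fin n → ℝ) → U, ∀ πd : (Fin n → ℝ) → D,
      ∀ t : ℕ, 0 < l ((cl f πu πd)^[t] x) ∧ 0 < g ((cl f πu πd)^[t] x)}

/-- The discounted value function
`H(x) = sup_{π_u} inf_{π_d} inf_t γ^t min(g(x_t), l(x_t))`. -/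
def Hval {n mu md : ℕ} (U : Set (Fin mu → ℝ)) (D : Set (Fin md → ℝ))
    (f : (Fin n → ℝ) → (Fin mu → ℝ) → (Fin md → ℝ) → (Fin n → ℝ))
    (γ : ℝ) (g l : (Fin n → ℝ) → ℝ) (x : Fin n → ℝ) : ℝ :=
  ⨆ πu : (Fin n → ℝ) → U, ⨅ πd : (Fin n → ℝ) → D, ⨅ t : ℕ,
    γ ^ t * min (g ((cl f πu πd)^[t] x)) (l ((cl f πu πd)^[t] x))

/-- `H_g(x) = H(x)` if `H(x) < 0`, and `g(x)` otherwise. -/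
def Hg {n mu md : ℕ} (U : Set (Fin mu → ℝ)) (D : Set (Fin md → ℝ))
    (f : (Fin n → ℝ) → (Fin mu → ℝ) → (Fin md → ℝ) → (Fin n → ℝ))
    (γ : ℝ) (g l : (Fin n → ℝ) → ℝ) (x : Fin n → ℝ) : ℝ :=
  if Hval U D f γ g l x < 0 then Hval U D f γ g l x else g x

/-- The discounted value function
`V(x) = sup_{π_u} inf_{π_d} sup_t min( γ^t H_g(x_t), inf_{s ≤ t} γ^s l(x_s) )`. -/
def Vval {n mu md : ℕ} (U : Set (Fin mu → ℝ)) (D : Set (Fin md → ℝ))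
    (f : (Fin n → ℝ) → (Fin mu → ℝ) → (Fin md → ℝ) → (Fin n → ℝ))
    (γ : ℝ) (g l : (Fin n → ℝ) → ℝ) (x : Fin n → ℝ) : ℝ :=
  ⨆ πu : (Fin n → ℝ) → U, ⨅ πd : (Fin n → ℝ) → D, ⨆ t : ℕ,
    min (γ ^ t * Hg U D f γ g l ((cl f πu πd)^[t] x))
      (⨅ s : Fin (t + 1), γ ^ (s : ℕ) * l ((cl f πu πd)^[(s : ℕ)] x))

open Classical in
/-- if `S ⊆ {g > 0} ∩ {l > 0}` is robustly invariant under `π_H` and `π_V`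
safely reaches `S` from `x` against every disturbance policy, then the switching policy
`π(y) = π_H(y)` if `y ∈ S`, else `π_V(y)`, achieves reach-avoid-stay from `x`;
in particular `x ∈ RAS`. -/
theorem switching_policy_achieves_RAS_of_invariant {n mu md : ℕ}
    (U : Set (Fin mu → ℝ)) (D : Set (Fin md → ℝ))
    (hU : U.Nonempty) (hD : D.Nonempty)
    (f : (Fin n → ℝ) → (Fin mu → ℝ) → (Fin md → ℝ) → (Fin n → ℝ))
    (g l : (Fin n → ℝ) → ℝ)
    (hg : ∃ M, ∀ y, |g y| ≤ M) (hl : ∃ M, ∀ y, |l y| ≤ M)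
    (S : Set (Fin n → ℝ))
    (hS : S ⊆ {y | 0 < g y} ∩ {y | 0 < l y})
    (πH πV : (Fin n → ℝ) → U)
    (hInv : ∀ y ∈ S, ∀ d ∈ D, f y (πH y) d ∈ S)
    (x : Fin n → ℝ)
    (hReach : ∀ πd : (Fin n → ℝ) → D,
      ∃ τ : ℕ, (cl f πV πd)^[τ] x ∈ S ∧ ∀ t : ℕ, t ≤ τ → 0 < l ((cl f πV πd)^[t] x)) :
    (∀ πd : (Fin n → ℝ) → D,
      (∀ t : ℕ, 0 < l ((cl f (fun y => if y ∈ S then πH y else πV y) πd)^[t] x)) ∧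
      ∃ τ : ℕ, ∀ t : ℕ, τ ≤ t →
        (cl f (fun y => if y ∈ S then πH y else πV y) πd)^[t] x ∈ S ∧
        0 < g ((cl f (fun y => if y ∈ S then πH y else πV y) πd)^[t] x)) ∧
    x ∈ RASset U D f g l := by
  have main : ∀ πd : (Fin n → ℝ) → D,
      (∀ t : ℕ, 0 < l ((cl f (fun y => if y ∈ S then πH y else πV y) πd)^[t] x)) ∧
      ∃ τ : ℕ, ∀ t : ℕ, τ ≤ t →
        (cl f (fun y => if y ∈ S then πH y else πV y) πd)^[t] x ∈ S ∧
        0 < g ((cl f (fun y => if y ∈ S then πH y else πV y) πd)^[t] x) := by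
    intro πd
    set π : (Fin n → ℝ) → U := fun y => if y ∈ S then πH y else πV y with hπ
    obtain ⟨τ, hτS, hτl⟩ := hReach πd
    have hex : ∃ t : ℕ, (cl f πV πd)^[t] x ∈ S := ⟨τ, hτS⟩
    set N := Nat.find hex with hN
    have hNτ : N ≤ τ := Nat.find_min' hex hτS
    have agree : ∀ t : ℕ, t ≤ N → (cl f π πd)^[t] x = (cl f πV πd)^[t] x := by
      intro t
      induction t with
      | zero => intro _; rfl
      | succ t ih =>
        intro ht
        have ht' : t < N := Nat.lt_of_succ_le ht
        have hnot : (cl f πV πd)^[t] x ∉ S := Nat.find_min hex ht'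
        rw [Function.iterate_succ_apply', Function.iterate_succ_apply',
          ih (le_of_lt ht')]
        show f _ (π _) _ = f _ (πV _) _
        rw [hπ]
        simp [hnot]
    have hNS : (cl f π πd)^[N] x ∈ S := by
      rw [agree N le_rfl]; exact Nat.find_spec hex
    have stay : ∀ t : ℕ, N ≤ t → (cl f π πd)^[t] x ∈ S := by
      intro t ht
      induction t, ht using Nat.le_induction with
      | base => exact hNS
      | succ t ht ih =>
        rw [Function.iterate_succ_apply']
        have : π ((cl f π πd)^[t] x) = πH ((cl f π πd)^[t] x) := by
          rw [hπ]; exact if_pos ih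
        show f _ (π _) _ ∈ S
        rw [this]
        exact hInv _ ih _ (πd _).2
    constructor
    · intro t
      rcases le_or_gt t N with h | h
      · rw [agree t h]; exact hτl t (le_trans h hNτ)
      · exact (hS (stay t (le_of_lt h))).2
    · exact ⟨N, fun t ht => ⟨stay t ht, (hS (stay t ht)).1⟩⟩
  refine ⟨main, ?_⟩
  exact ⟨fun y => if y ∈ S then πH y else πV y, fun πd =>
    ⟨(main πd).1, (main πd).2.imp fun τ h t ht => (h t ht).2⟩⟩
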